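/- Any three pairwise mutually unbiased orthonormal bases of ℂ² form a 3-fold unbiased set (3UB): for all x_1, x_2, x_3 ∈ {1,2}, ⟨1_{x_1}|2_{x_2}⟩⟨2_{x_2}|3_{x_3}⟩⟨3_{x_3}|1_{x_1}⟩ + ⟨1_{x_1}|3_{x_3}⟩⟨3_{x_3}|2_{x_2}⟩⟨2_{x_2}|1_{x_1}⟩ = 2!/2² = 1/2. -/
import Mathlib


open scoped InnerProductSpace

open Complex in
private lemma key_calc (p q : ℂ) (hp : ‖p‖ = 1 / 2) (hq : ‖q‖ = 1 / 2)
    (hpq : ‖p + q‖ = 1 / Real.sqrt 2) :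
    p * (starRingEnd ℂ) (p + q) + (p + q) * (starRingEnd ℂ) p = 1 / 2 := by
  have h1 : p * (starRingEnd ℂ) p = (1 / 4 : ℝ) := by
    rw [Complex.mul_conj']
    norm_cast
    rw [hp]; norm_num
  have h2 : q * (starRingEnd ℂ) q = (1 / 4 : ℝ) := by
    rw [Complex.mul_conj']
    norm_cast
    rw [hq]; norm_num
  have h3 : (p + q) * (starRingEnd ℂ) (p + q) = (1 / 2 : ℝ) := by
    rw [Complex.mul_conj']
    norm_cast
    rw [hpq, div_pow, one_pow, Real.sq_sqrt (by norm_num)]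
  have h4 : p * (starRingEnd ℂ) q + q * (starRingEnd ℂ) p = 0 := by
    have := h3
    rw [map_add, add_mul, mul_add, mul_add, h1, h2] at this
    push_cast at this ⊢
    linear_combination this
  have : p * (starRingEnd ℂ) (p + q) + (p + q) * (starRingEnd ℂ) p
      = 2 * (p * (starRingEnd ℂ) p) + (p * (starRingEnd ℂ) q + q * (starRingEnd ℂ) p) := by
    rw [map_add]; ring
  rw [this, h1, h4]
  push_cast
  ring

private lemma sum_fin2 (f : Fin 2 → ℂ) (x : Fin 2) : ∑ i, f i = f x + f (x + 1) := by
  fin_cases x <;> simp [Fin.sum_univ_two] <;> ring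

/-- Any three pairwise mutually unbiased orthonormal bases of `ℂ²` form a 3-fold unbiased
set: for all index choices, the sum of the two cyclic triple products of overlaps equals
`2!/2² = 1/2`. -/
theorem stmt_9 (B₁ B₂ B₃ : OrthonormalBasis (Fin 2) ℂ (EuclideanSpace ℂ (Fin 2)))
    (h12 : ∀ i j, ‖⟪B₁ i, B₂ j⟫_ℂ‖ = 1 / Real.sqrt 2)
    (h13 : ∀ i j, ‖⟪B₁ i, B₃ j⟫_ℂ‖ = 1 / Real.sqrt 2)
    (h23 : ∀ i j, ‖⟪B₂ i, B₃ j⟫_ℂ‖ = 1 / Real.sqrt 2)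
    (x₁ x₂ x₃ : Fin 2) :
    ⟪B₁ x₁, B₂ x₂⟫_ℂ * ⟪B₂ x₂, B₃ x₃⟫_ℂ * ⟪B₃ x₃, B₁ x₁⟫_ℂ
      + ⟪B₁ x₁, B₃ x₃⟫_ℂ * ⟪B₃ x₃, B₂ x₂⟫_ℂ * ⟪B₂ x₂, B₁ x₁⟫_ℂ = 1 / 2 := by
  set p : ℂ := ⟪B₁ x₁, B₂ x₂⟫_ℂ * ⟪B₂ x₂, B₃ x₃⟫_ℂ with hp_def
  set q : ℂ := ⟪B₁ x₁, B₂ (x₂ + 1)⟫_ℂ * ⟪B₂ (x₂ + 1), B₃ x₃⟫_ℂ with hq_def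
  have hsqrt : (1 : ℝ) / Real.sqrt 2 * (1 / Real.sqrt 2) = 1 / 2 := by
    rw [div_mul_div_comm, Real.mul_self_sqrt (by norm_num)]; norm_num
  have hpq : p + q = ⟪B₁ x₁, B₃ x₃⟫_ℂ := by
    rw [← B₂.sum_inner_mul_inner (B₁ x₁) (B₃ x₃),
      sum_fin2 (fun i => ⟪B₁ x₁, B₂ i⟫_ℂ * ⟪B₂ i, B₃ x₃⟫_ℂ) x₂]
  have hnp : ‖p‖ = 1 / 2 := by
    rw [hp_def, norm_mul, h12, h23, hsqrt]
  have hnq : ‖q‖ = 1 / 2 := by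
    rw [hq_def, norm_mul, h12, h23, hsqrt]
  have hnpq : ‖p + q‖ = 1 / Real.sqrt 2 := by rw [hpq]; exact h13 x₁ x₃
  have e1 : ⟪B₃ x₃, B₁ x₁⟫_ℂ = (starRingEnd ℂ) (p + q) := by
    rw [hpq, inner_conj_symm]
  have e2 : ⟪B₃ x₃, B₂ x₂⟫_ℂ = (starRingEnd ℂ) ⟪B₂ x₂, B₃ x₃⟫_ℂ := by
    rw [inner_conj_symm]
  have e3 : ⟪B₂ x₂, B₁ x₁⟫_ℂ = (starRingEnd ℂ) ⟪B₁ x₁, B₂ x₂⟫_ℂ := by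
    rw [inner_conj_symm]
  rw [e1, e2, e3, ← hpq]
  have e4 : (starRingEnd ℂ) ⟪B₂ x₂, B₃ x₃⟫_ℂ * (starRingEnd ℂ) ⟪B₁ x₁, B₂ x₂⟫_ℂ
      = (starRingEnd ℂ) p := by rw [hp_def, map_mul]; ring
  have := key_calc p q hnp hnq hnpq
  linear_combination this + (p + q) * e4
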